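/- Let x̄ ∈ F be a feasible point of (MPSC) and assume MPSC-PWCR holds at x̄. Then MPSC-WSOCQ holds at x̄. -/

import Mathlib

open Set Filter Topology Metric

noncomputable section

namespace MPSC

abbrev Vec (n : ℕ) := EuclideanSpace ℝ (Fin n)

variable {n m p l : ℕ}

open scoped Classical in
/-- Sum of a function over an index set (finite ambient type). -/
noncomputable def sumOver {α β : Type*} [Fintype α] [AddCommMonoid β]
    (S : Set α) (v : α → β) : β :=
  ∑ a, if a ∈ S then v a else 0

/-- The feasible set of (MPSC). -/
def Feas (g : Fin m → Vec n → ℝ) (h : Fin p → Vec n → ℝ)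
    (G H : Fin l → Vec n → ℝ) : Set (Vec n) :=
  {x | (∀ i, g i x ≤ 0) ∧ (∀ j, h j x = 0) ∧ ∀ k, G k x * H k x = 0}

/-- Index set of active inequality constraints. -/
def Ig (g : Fin m → Vec n → ℝ) (xb : Vec n) : Set (Fin m) := {i | g i xb = 0}

def IG (G H : Fin l → Vec n → ℝ) (xb : Vec n) : Set (Fin l) :=
  {k | G k xb = 0 ∧ H k xb ≠ 0}

def IH (G H : Fin l → Vec n → ℝ) (xb : Vec n) : Set (Fin l) :=
  {k | G k xb ≠ 0 ∧ H k xb = 0}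

def IGH (G H : Fin l → Vec n → ℝ) (xb : Vec n) : Set (Fin l) :=
  {k | G k xb = 0 ∧ H k xb = 0}

/-- (β1, β2) is a disjoint bipartition of I_GH. -/
def Partition (G H : Fin l → Vec n → ℝ) (xb : Vec n) (β1 β2 : Set (Fin l)) : Prop :=
  β1 ∩ β2 = ∅ ∧ β1 ∪ β2 = IGH G H xb

/-- Branch feasible set. -/
def BranchFeas (g : Fin m → Vec n → ℝ) (h : Fin p → Vec n → ℝ)
    (G H : Fin l → Vec n → ℝ) (xb : Vec n) (β1 β2 : Set (Fin l)) : Set (Vec n) :=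
  {x | (∀ i, g i x ≤ 0) ∧ (∀ j, h j x = 0) ∧
    (∀ k ∈ IG G H xb ∪ β1, G k x = 0) ∧ ∀ k ∈ IH G H xb ∪ β2, H k x = 0}

/-- Bouligand tangent cone, as defined in the paper. -/
def tangentCone (Ω : Set (Vec n)) (xb : Vec n) : Set (Vec n) :=
  {d | ∃ t : ℕ → ℝ, ∃ x : ℕ → Vec n, (∀ k, 0 ≤ t k) ∧ (∀ k, x k ∈ Ω) ∧
    Tendsto x atTop (nhds xb) ∧ Tendsto (fun k => t k • (x k - xb)) atTop (nhds d)}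

/-- MPSC linearization cone. -/
def LCone (g : Fin m → Vec n → ℝ) (h : Fin p → Vec n → ℝ)
    (G H : Fin l → Vec n → ℝ) (xb : Vec n) : Set (Vec n) :=
  {d | (∀ i ∈ Ig g xb, fderiv ℝ (g i) xb d ≤ 0) ∧ (∀ j, fderiv ℝ (h j) xb d = 0) ∧
    (∀ k ∈ IG G H xb, fderiv ℝ (G k) xb d = 0) ∧ (∀ k ∈ IH G H xb, fderiv ℝ (H k) xb d = 0) ∧
    ∀ k ∈ IGH G H xb, fderiv ℝ (G k) xb d * fderiv ℝ (H k) xb d = 0}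

/-- Branch linearization cone. -/
def BranchLCone (g : Fin m → Vec n → ℝ) (h : Fin p → Vec n → ℝ)
    (G H : Fin l → Vec n → ℝ) (xb : Vec n) (β1 β2 : Set (Fin l)) : Set (Vec n) :=
  {d | (∀ i ∈ Ig g xb, fderiv ℝ (g i) xb d ≤ 0) ∧ (∀ j, fderiv ℝ (h j) xb d = 0) ∧
    (∀ k ∈ IG G H xb ∪ β1, fderiv ℝ (G k) xb d = 0) ∧
    ∀ k ∈ IH G H xb ∪ β2, fderiv ℝ (H k) xb d = 0}

/-- MPSC critical subspace. -/
def CritSubspace (g : Fin m → Vec n → ℝ) (h : Fin p → Vec n → ℝ)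
    (G H : Fin l → Vec n → ℝ) (xb : Vec n) : Set (Vec n) :=
  {d | (∀ i ∈ Ig g xb, fderiv ℝ (g i) xb d = 0) ∧ (∀ j, fderiv ℝ (h j) xb d = 0) ∧
    (∀ k ∈ IG G H xb ∪ IGH G H xb, fderiv ℝ (G k) xb d = 0) ∧
    ∀ k ∈ IH G H xb ∪ IGH G H xb, fderiv ℝ (H k) xb d = 0}

/-- Rank (dimension of the span) of the family of gradients
{∇g_i(x)}_{i∈I1} ∪ {∇h_j(x)}_j ∪ {∇G_k(x)}_{k∈I3} ∪ {∇H_k(x)}_{k∈I4}. -/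
def gradRank (g : Fin m → Vec n → ℝ) (h : Fin p → Vec n → ℝ)
    (G H : Fin l → Vec n → ℝ) (I1 : Set (Fin m)) (I3 I4 : Set (Fin l)) (x : Vec n) : ℕ :=
  Module.finrank ℝ ↥(Submodule.span ℝ
    ((fun i => gradient (g i) x) '' I1 ∪ Set.range (fun j => gradient (h j) x) ∪
     (fun k => gradient (G k) x) '' I3 ∪ (fun k => gradient (H k) x) '' I4))

/-- MPSC-LICQ. -/
def LICQ (g : Fin m → Vec n → ℝ) (h : Fin p → Vec n → ℝ)
    (G H : Fin l → Vec n → ℝ) (xb : Vec n) : Prop :=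
  ∀ (lam : Fin m → ℝ) (ρ : Fin p → ℝ) (μ ν : Fin l → ℝ),
    (∀ i, i ∉ Ig g xb → lam i = 0) →
    (∀ k, k ∉ IG G H xb ∪ IGH G H xb → μ k = 0) →
    (∀ k, k ∉ IH G H xb ∪ IGH G H xb → ν k = 0) →
    ∑ i, lam i • gradient (g i) xb + ∑ j, ρ j • gradient (h j) xb +
      ∑ k, μ k • gradient (G k) xb + ∑ k, ν k • gradient (H k) xb = 0 →
    lam = 0 ∧ ρ = 0 ∧ μ = 0 ∧ ν = 0

/-- MPSC-RCRCQ. -/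
def RCRCQ (g : Fin m → Vec n → ℝ) (h : Fin p → Vec n → ℝ)
    (G H : Fin l → Vec n → ℝ) (xb : Vec n) : Prop :=
  ∃ ε > (0:ℝ), ∀ I1 : Set (Fin m), I1 ⊆ Ig g xb →
    ∀ I3 I4 : Set (Fin l), I3 ⊆ IGH G H xb → I4 ⊆ IGH G H xb →
      ∀ x : Vec n, ‖x - xb‖ < ε →
        gradRank g h G H I1 (I3 ∪ IG G H xb) (I4 ∪ IH G H xb) x =
        gradRank g h G H I1 (I3 ∪ IG G H xb) (I4 ∪ IH G H xb) xb

/-- MPSC-WCR. -/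
def WCR (g : Fin m → Vec n → ℝ) (h : Fin p → Vec n → ℝ)
    (G H : Fin l → Vec n → ℝ) (xb : Vec n) : Prop :=
  ∃ ε > (0:ℝ), ∀ x : Vec n, ‖x - xb‖ < ε →
    gradRank g h G H (Ig g xb) (IG G H xb ∪ IGH G H xb) (IH G H xb ∪ IGH G H xb) x =
    gradRank g h G H (Ig g xb) (IG G H xb ∪ IGH G H xb) (IH G H xb ∪ IGH G H xb) xb

/-- MPSC-PWCR. -/
def PWCR (g : Fin m → Vec n → ℝ) (h : Fin p → Vec n → ℝ)
    (G H : Fin l → Vec n → ℝ) (xb : Vec n) : Prop :=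
  ∀ β1 β2 : Set (Fin l), Partition G H xb β1 β2 →
    ∃ ε > (0:ℝ), ∀ x : Vec n, ‖x - xb‖ < ε →
      gradRank g h G H (Ig g xb) (IG G H xb ∪ β1) (IH G H xb ∪ β2) x =
      gradRank g h G H (Ig g xb) (IG G H xb ∪ β1) (IH G H xb ∪ β2) xb

/-- The index set I_g^- associated with a branch (β1, β2). -/
def IgMinus (g : Fin m → Vec n → ℝ) (h : Fin p → Vec n → ℝ)
    (G H : Fin l → Vec n → ℝ) (xb : Vec n) (β1 β2 : Set (Fin l)) : Set (Fin m) :=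
  {i | i ∈ Ig g xb ∧ ∃ (lam : Fin m → ℝ) (ρ : Fin p → ℝ) (μ ν : Fin l → ℝ),
    (∀ i', 0 ≤ lam i') ∧ (∀ i', i' ∉ Ig g xb \ {i} → lam i' = 0) ∧
    (∀ k, k ∉ IG G H xb ∪ β1 → μ k = 0) ∧ (∀ k, k ∉ IH G H xb ∪ β2 → ν k = 0) ∧
    -gradient (g i) xb = ∑ i', lam i' • gradient (g i') xb + ∑ j, ρ j • gradient (h j) xb +
      ∑ k, μ k • gradient (G k) xb + ∑ k, ν k • gradient (H k) xb}

/-- MPSC-PCRSC. -/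
def PCRSC (g : Fin m → Vec n → ℝ) (h : Fin p → Vec n → ℝ)
    (G H : Fin l → Vec n → ℝ) (xb : Vec n) : Prop :=
  ∀ β1 β2 : Set (Fin l), Partition G H xb β1 β2 →
    ∃ ε > (0:ℝ), ∀ x : Vec n, ‖x - xb‖ < ε →
      gradRank g h G H (IgMinus g h G H xb β1 β2) (IG G H xb ∪ β1) (IH G H xb ∪ β2) x =
      gradRank g h G H (IgMinus g h G H xb β1 β2) (IG G H xb ∪ β1) (IH G H xb ∪ β2) xb

/-- A twice differentiable arc on [0, δ) (one-sided at the endpoint 0),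
with first derivative ξ'. -/
def TwiceDiffArc (δ : ℝ) (ξ ξ' : ℝ → Vec n) : Prop :=
  (∀ t ∈ Ico (0:ℝ) δ, HasDerivWithinAt ξ (ξ' t) (Ico (0:ℝ) δ) t) ∧
  ∀ t ∈ Ico (0:ℝ) δ, DifferentiableWithinAt ℝ ξ' (Ico (0:ℝ) δ) t

/-- MPSC-SSOCQ. -/
def SSOCQ (g : Fin m → Vec n → ℝ) (h : Fin p → Vec n → ℝ)
    (G H : Fin l → Vec n → ℝ) (xb : Vec n) : Prop :=
  ∀ d ∈ LCone g h G H xb, d ≠ 0 →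
    ∃ δ > (0:ℝ), ∃ J K : Set (Fin l), J ⊆ IGH G H xb ∧ K ⊆ IGH G H xb ∧
      ∃ ξ ξ' : ℝ → Vec n, TwiceDiffArc δ ξ ξ' ∧
        (∀ t ∈ Ico (0:ℝ) δ, ξ t ∈ Feas g h G H) ∧
        ξ 0 = xb ∧ ξ' 0 = d ∧
        (∀ t ∈ Ico (0:ℝ) δ, ∀ i ∈ Ig g xb, fderiv ℝ (g i) xb d = 0 → g i (ξ t) = 0) ∧
        (∀ t ∈ Ico (0:ℝ) δ, ∀ k ∈ IG G H xb ∪ J, G k (ξ t) = 0) ∧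
        ∀ t ∈ Ico (0:ℝ) δ, ∀ k ∈ IH G H xb ∪ K, H k (ξ t) = 0

/-- MPSC-WSOCQ. -/
def WSOCQ (g : Fin m → Vec n → ℝ) (h : Fin p → Vec n → ℝ)
    (G H : Fin l → Vec n → ℝ) (xb : Vec n) : Prop :=
  ∀ d ∈ CritSubspace g h G H xb, d ≠ 0 →
    ∃ δ > (0:ℝ), ∃ J K : Set (Fin l), J ⊆ IGH G H xb ∧ K ⊆ IGH G H xb ∧
      ∃ ζ ζ' : ℝ → Vec n, TwiceDiffArc δ ζ ζ' ∧
        (∀ t ∈ Ico (0:ℝ) δ, ζ t ∈ Feas g h G H) ∧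
        ζ 0 = xb ∧ ζ' 0 = d ∧
        (∀ t ∈ Ico (0:ℝ) δ, ∀ i ∈ Ig g xb, g i (ζ t) = 0) ∧
        (∀ t ∈ Ico (0:ℝ) δ, ∀ k ∈ IG G H xb ∪ J, G k (ζ t) = 0) ∧
        ∀ t ∈ Ico (0:ℝ) δ, ∀ k ∈ IH G H xb ∪ K, H k (ζ t) = 0

/-- The S-stationarity system for multipliers (λ, ρ, μ, ν) at xb. -/
def SStationarySystem (f : Vec n → ℝ) (g : Fin m → Vec n → ℝ) (h : Fin p → Vec n → ℝ)
    (G H : Fin l → Vec n → ℝ) (xb : Vec n)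
    (lam : Fin m → ℝ) (ρ : Fin p → ℝ) (μ ν : Fin l → ℝ) : Prop :=
  (∀ i, 0 ≤ lam i) ∧ (∀ i, lam i * g i xb = 0) ∧
  (∀ k ∈ IH G H xb ∪ IGH G H xb, μ k = 0) ∧
  (∀ k ∈ IG G H xb ∪ IGH G H xb, ν k = 0) ∧
  gradient f xb + ∑ i, lam i • gradient (g i) xb + ∑ j, ρ j • gradient (h j) xb +
    ∑ k, μ k • gradient (G k) xb + ∑ k, ν k • gradient (H k) xb = 0

def SStationary (f : Vec n → ℝ) (g : Fin m → Vec n → ℝ) (h : Fin p → Vec n → ℝ)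
    (G H : Fin l → Vec n → ℝ) (xb : Vec n) : Prop :=
  ∃ (lam : Fin m → ℝ) (ρ : Fin p → ℝ) (μ ν : Fin l → ℝ),
    SStationarySystem f g h G H xb lam ρ μ ν

/-- The M-stationarity system for multipliers (λ, ρ, μ, ν) at xb. -/
def MStationarySystem (f : Vec n → ℝ) (g : Fin m → Vec n → ℝ) (h : Fin p → Vec n → ℝ)
    (G H : Fin l → Vec n → ℝ) (xb : Vec n)
    (lam : Fin m → ℝ) (ρ : Fin p → ℝ) (μ ν : Fin l → ℝ) : Prop :=
  (∀ i, 0 ≤ lam i) ∧ (∀ i, lam i * g i xb = 0) ∧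
  (∀ k ∈ IH G H xb, μ k = 0) ∧ (∀ k ∈ IG G H xb, ν k = 0) ∧
  (∀ k ∈ IGH G H xb, μ k * ν k = 0) ∧
  gradient f xb + ∑ i, lam i • gradient (g i) xb + ∑ j, ρ j • gradient (h j) xb +
    ∑ k, μ k • gradient (G k) xb + ∑ k, ν k • gradient (H k) xb = 0

def MStationary (f : Vec n → ℝ) (g : Fin m → Vec n → ℝ) (h : Fin p → Vec n → ℝ)
    (G H : Fin l → Vec n → ℝ) (xb : Vec n) : Prop :=
  ∃ (lam : Fin m → ℝ) (ρ : Fin p → ℝ) (μ ν : Fin l → ℝ),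
    MStationarySystem f g h G H xb lam ρ μ ν

/-- Local optimality for (MPSC). -/
def LocallyOptimal (f : Vec n → ℝ) (g : Fin m → Vec n → ℝ) (h : Fin p → Vec n → ℝ)
    (G H : Fin l → Vec n → ℝ) (xb : Vec n) : Prop :=
  xb ∈ Feas g h G H ∧ ∃ ε > (0:ℝ), ∀ x ∈ Feas g h G H, ‖x - xb‖ < ε → f xb ≤ f x

/-- Hessian quadratic form dᵀ∇²φ(x)d. -/
def hessForm (φ : Vec n → ℝ) (x d : Vec n) : ℝ :=
  iteratedFDeriv ℝ 2 φ x ![d, d]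

/-- The Lagrange function ℓ. -/
def lagr (f : Vec n → ℝ) (g : Fin m → Vec n → ℝ) (h : Fin p → Vec n → ℝ)
    (G H : Fin l → Vec n → ℝ)
    (lam : Fin m → ℝ) (ρ : Fin p → ℝ) (μ ν : Fin l → ℝ) : Vec n → ℝ :=
  fun x => f x + ∑ i, lam i * g i x + ∑ j, ρ j * h j x +
    ∑ k, μ k * G k x + ∑ k, ν k * H k x

/-- Constraint-violation residual. -/
def residual (g : Fin m → Vec n → ℝ) (h : Fin p → Vec n → ℝ)
    (G H : Fin l → Vec n → ℝ) (x : Vec n) : ℝ :=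
  Real.sqrt (∑ i, max (g i x) 0 ^ 2 + ∑ j, h j x ^ 2 + ∑ k, min (G k x ^ 2) (H k x ^ 2))

/-- Penalty function P_κ. -/
def Pen (f : Vec n → ℝ) (g : Fin m → Vec n → ℝ) (h : Fin p → Vec n → ℝ)
    (G H : Fin l → Vec n → ℝ) (κ : ℝ) (x : Vec n) : ℝ :=
  f x + κ * residual g h G H x

/-- MPSC piecewise second-order quasi-normality. -/
def PSOQN (g : Fin m → Vec n → ℝ) (h : Fin p → Vec n → ℝ)
    (G H : Fin l → Vec n → ℝ) (xb : Vec n) : Prop :=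
  ∀ β1 β2 : Set (Fin l), Partition G H xb β1 β2 →
    ¬ ∃ (lam : Fin m → ℝ) (ρ : Fin p → ℝ) (μ ν : Fin l → ℝ),
      (∀ i, 0 ≤ lam i) ∧
      (∀ k, k ∉ IG G H xb ∪ β1 → μ k = 0) ∧ (∀ k, k ∉ IH G H xb ∪ β2 → ν k = 0) ∧
      ¬(lam = 0 ∧ ρ = 0 ∧ μ = 0 ∧ ν = 0) ∧
      (∑ i, lam i • gradient (g i) xb + ∑ j, ρ j • gradient (h j) xb +
        ∑ k, μ k • gradient (G k) xb + ∑ k, ν k • gradient (H k) xb = 0) ∧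
      (∀ d : Vec n, (∀ i ∈ Ig g xb, fderiv ℝ (g i) xb d = 0) →
        (∀ j, fderiv ℝ (h j) xb d = 0) →
        (∀ k ∈ IG G H xb ∪ β1, fderiv ℝ (G k) xb d = 0) →
        (∀ k ∈ IH G H xb ∪ β2, fderiv ℝ (H k) xb d = 0) →
        0 ≤ ∑ i, lam i * hessForm (g i) xb d + ∑ j, ρ j * hessForm (h j) xb d +
          ∑ k, μ k * hessForm (G k) xb d + ∑ k, ν k * hessForm (H k) xb d) ∧
      ∃ xs : ℕ → Vec n, Tendsto xs atTop (nhds xb) ∧ ∀ s,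
        (∀ i, 0 < lam i → 0 < lam i * g i (xs s)) ∧
        (∀ j, ρ j ≠ 0 → 0 < ρ j * h j (xs s)) ∧
        (∀ k, μ k ≠ 0 → 0 < μ k * G k (xs s)) ∧
        (∀ k, ν k ≠ 0 → 0 < ν k * H k (xs s))

section Aux
open scoped RealInnerProductSpace

variable {n : ℕ}

private lemma inner_grad (φ : Vec n → ℝ) (x v : Vec n) :
    ⟪gradient φ x, v⟫ = fderiv ℝ φ x v :=
  InnerProductSpace.toDual_symm_apply

private lemma grad_cont {φ : Vec n → ℝ} (hφ : ContDiff ℝ 2 φ) :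
    Continuous fun x => gradient φ x :=
  (InnerProductSpace.toDual ℝ (Vec n)).symm.continuous.comp
    (hφ.continuous_fderiv (by norm_num))

theorem arc_of_rank {ι : Type} [Fintype ι] (Φ : ι → Vec n → ℝ)
    (hΦ : ∀ a, ContDiff ℝ 2 (Φ a)) (xb : Vec n) (hval : ∀ a, Φ a xb = 0)
    {ε : ℝ} (hε : 0 < ε)
    (hrank : ∀ x : Vec n, ‖x - xb‖ < ε →
      Module.finrank ℝ ↥(Submodule.span ℝ (Set.range fun a => gradient (Φ a) x)) =
      Module.finrank ℝ ↥(Submodule.span ℝ (Set.range fun a => gradient (Φ a) xb)))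
    (d : Vec n) (hd : ∀ a, fderiv ℝ (Φ a) xb d = 0) :
    ∃ δ > (0:ℝ), ∃ ζ : ℝ → Vec n, TwiceDiffArc δ ζ (deriv ζ) ∧ ζ 0 = xb ∧
      deriv ζ 0 = d ∧ ContinuousAt ζ 0 ∧ ∀ t ∈ Ico (0:ℝ) δ, ∀ a, Φ a (ζ t) = 0 := by
  classical
  set w : ι → Vec n := fun a => gradient (Φ a) xb with hw
  obtain ⟨tset, hts, htspan, htind⟩ := exists_linearIndependent ℝ (Set.range w)
  have htfin : tset.Finite := (Set.finite_range w).subset hts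
  haveI : Fintype tset := htfin.fintype
  choose idx hidx using fun b : tset => hts b.2
  set u : Vec n → tset → Vec n := fun x b => gradient (Φ (idx b)) x with hu
  have huxb : u xb = fun b : tset => (b : Vec n) := funext fun b => hidx b
  have hindxb : LinearIndependent ℝ (u xb) := by rw [huxb]; exact htind
  -- independence persists nearby
  have hucont : Continuous fun x => u x :=
    continuous_pi fun b => grad_cont (hΦ (idx b))
  have hopen : IsOpen {x : Vec n | LinearIndependent ℝ (u x)} :=
    isOpen_setOf_linearIndependent.preimage hucont
  obtain ⟨ε1, hε1, hball⟩ := Metric.isOpen_iff.1 hopen xb hindxb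
  set ε2 := min ε ε1 with hε2def
  have hε2 : 0 < ε2 := lt_min hε hε1
  have hind : ∀ x : Vec n, ‖x - xb‖ < ε2 → LinearIndependent ℝ (u x) := by
    intro x hx
    exact hball (by simpa [Metric.mem_ball, dist_eq_norm] using hx.trans_le (min_le_right _ _))
  -- span equality nearby
  have hspan : ∀ x : Vec n, ‖x - xb‖ < ε2 →
      Submodule.span ℝ (Set.range (u x)) =
      Submodule.span ℝ (Set.range fun a => gradient (Φ a) x) := by
    intro x hx
    have hle : Submodule.span ℝ (Set.range (u x)) ≤
        Submodule.span ℝ (Set.range fun a => gradient (Φ a) x) :=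
      Submodule.span_mono (by rintro _ ⟨b, rfl⟩; exact ⟨idx b, rfl⟩)
    have h1 : Module.finrank ℝ ↥(Submodule.span ℝ (Set.range (u x))) = Fintype.card tset :=
      finrank_span_eq_card (hind x hx)
    have h2 : Module.finrank ℝ ↥(Submodule.span ℝ (Set.range (u xb))) = Fintype.card tset :=
      finrank_span_eq_card hindxb
    have hrxb : Submodule.span ℝ (Set.range (u xb)) =
        Submodule.span ℝ (Set.range fun a => gradient (Φ a) xb) := by
      rw [huxb, Subtype.range_coe, htspan]
    refine Submodule.eq_of_le_of_finrank_le hle ?_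
    rw [h1, hrank x (hx.trans_le (min_le_left _ _)), ← hrxb, h2]
  have hperp : ∀ x : Vec n, ‖x - xb‖ < ε2 → ∀ v : Vec n,
      (∀ b : tset, fderiv ℝ (Φ (idx b)) x v = 0) → ∀ a, fderiv ℝ (Φ a) x v = 0 := by
    intro x hx v hv a
    have hmem : gradient (Φ a) x ∈ Submodule.span ℝ (Set.range (u x)) := by
      rw [hspan x hx]; exact Submodule.subset_span ⟨a, rfl⟩
    rw [← inner_grad]
    refine Submodule.span_induction (p := fun y _ => ⟪y, v⟫ = 0) ?_ ?_ ?_ ?_ hmem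
    · rintro y ⟨b, rfl⟩; rw [inner_grad]; exact hv b
    · simp
    · intro y z _ _ hy hz; rw [inner_add_left, hy, hz, add_zero]
    · intro c y _ hy; rw [real_inner_smul_left, hy, mul_zero]
  -- the implicit function theorem construction
  set Y := tset → ℝ with hY
  set L : Y →L[ℝ] Vec n :=
    ∑ b : tset, (ContinuousLinearMap.proj b).smulRight ((b : Vec n)) with hL
  have hLapp : ∀ z : Y, L z = ∑ b : tset, z b • (b : Vec n) := by
    intro z; rw [hL, ContinuousLinearMap.sum_apply]; rfl
  set Tl : Y →L[ℝ] Y :=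
    ContinuousLinearMap.pi (fun b : tset => (innerSL ℝ ((b : Vec n))).comp L) with hTl
  have hTlapp : ∀ z b, Tl z b = ⟪(b : Vec n), L z⟫ := fun z b => rfl
  have hTlinj : Function.Injective Tl := by
    intro z z' hzz
    have hz : Tl (z - z') = 0 := by rw [map_sub, hzz, sub_self]
    set y := z - z' with hy
    have hLy : L y = 0 := by
      have h0 : ⟪L y, L y⟫ = 0 := by
        nth_rewrite 1 [hLapp]
        rw [sum_inner]
        refine Finset.sum_eq_zero fun b _ => ?_
        rw [real_inner_smul_left]
        have hb : Tl y b = 0 := by rw [hz]; rfl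
        rw [hTlapp] at hb
        rw [hb, mul_zero]
      exact inner_self_eq_zero.mp h0
    have : ∀ b, y b = 0 := by
      have := Fintype.linearIndependent_iff.mp htind y (by rw [← hLapp]; exact hLy)
      exact this
    have : y = 0 := funext this
    exact sub_eq_zero.mp this
  have hTlbij : Function.Bijective Tl :=
    ⟨hTlinj, LinearMap.injective_iff_surjective.mp hTlinj⟩
  set T : Y ≃L[ℝ] Y :=
    LinearEquiv.toContinuousLinearEquiv (LinearEquiv.ofBijective (Tl : Y →ₗ[ℝ] Y) hTlbij) with hT
  have hTapp : ∀ z, T z = Tl z := fun z => rfl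
  -- the maps
  set c' : (ℝ × Y) →L[ℝ] Vec n :=
    (ContinuousLinearMap.fst ℝ ℝ Y).smulRight d +
      L.comp (ContinuousLinearMap.snd ℝ ℝ Y) with hc'
  have hc'app : ∀ q : ℝ × Y, c' q = q.1 • d + L q.2 := fun q => rfl
  set c : ℝ × Y → Vec n := fun q => xb + c' q with hc
  have hcd : ∀ q : ℝ × Y, HasFDerivAt c c' q := fun q => c'.hasFDerivAt.const_add xb
  have hccd : ContDiff ℝ 2 c := contDiff_const.add c'.contDiff
  have hc00 : c (0, 0) = xb := by simp [hc, hc'app]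
  set Θ : ℝ × Y → ℝ × Y := fun q => (q.1, fun b : tset => Φ (idx b) (c q)) with hΘ
  set Θ' : (ℝ × Y) ≃L[ℝ] (ℝ × Y) := (ContinuousLinearEquiv.refl ℝ ℝ).prodCongr T with hΘ'
  have hΘ0 : Θ (0, 0) = (0, 0) := by
    simp only [hΘ, hc00]
    exact Prod.ext rfl (funext fun b => hval (idx b))
  have hΘcd : ContDiffAt ℝ 2 Θ (0, 0) :=
    (contDiff_fst.prodMk (contDiff_pi.2 fun b => (hΦ (idx b)).comp hccd)).contDiffAt
  have hΘd : HasFDerivAt Θ (Θ' : (ℝ × Y) →L[ℝ] (ℝ × Y)) (0, 0) := by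
    have h2 : HasFDerivAt (fun q : ℝ × Y => (fun b : tset => Φ (idx b) (c q)))
        (ContinuousLinearMap.pi fun b : tset => (fderiv ℝ (Φ (idx b)) xb).comp c') (0, 0) := by
      refine hasFDerivAt_pi.2 fun b => ?_
      have hb := ((hΦ (idx b)).differentiable (by norm_num)).differentiableAt
        (x := c (0,0)) |>.hasFDerivAt
      have := hb.comp (0, (0:Y)) (hcd (0, 0))
      rwa [hc00] at this
    have h3 := (hasFDerivAt_fst (𝕜 := ℝ) (p := ((0:ℝ), (0:Y)))).prodMk h2
    refine HasFDerivAt.congr_fderiv h3 (Eq.symm ?_)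
    refine ContinuousLinearMap.ext fun q => ?_
    have hfst : (Θ' : (ℝ × Y) →L[ℝ] (ℝ × Y)) q = (q.1, T q.2) := rfl
    rw [hfst]
    refine Prod.ext rfl ?_
    show Tl q.2 = _
    funext b
    rw [hTlapp]
    show _ = fderiv ℝ (Φ (idx b)) xb (c' q)
    rw [hc'app, map_add, map_smul, hd (idx b), smul_zero, zero_add, ← inner_grad]
    have : gradient (Φ (idx b)) xb = (b : Vec n) := hidx b
    rw [this]
  -- local inverse
  have hone : (2 : WithTop ℕ∞) ≠ 0 := by norm_num
  set inv : ℝ × Y → ℝ × Y := hΘcd.localInverse hΘd hone with hinv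
  have hinvcd : ContDiffAt ℝ 2 inv (0, 0) := by
    have := hΘcd.to_localInverse hΘd hone
    rwa [hΘ0] at this
  have hinv0 : inv (0, 0) = (0, 0) := by
    have := hΘcd.localInverse_apply_image hΘd hone
    rwa [hΘ0] at this
  have hstrict : HasStrictFDerivAt Θ (Θ' : (ℝ × Y) →L[ℝ] (ℝ × Y)) (0, 0) :=
    hΘcd.hasStrictFDerivAt' hΘd hone
  have hright : ∀ᶠ q in nhds ((0:ℝ), (0:Y)), Θ (inv q) = q := by
    have := hstrict.eventually_right_inverse
    rwa [hΘ0] at this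
  have hinvd : HasFDerivAt inv (Θ'.symm : (ℝ × Y) →L[ℝ] (ℝ × Y)) (0, 0) := by
    have := hstrict.to_localInverse
    rw [hΘ0] at this
    exact this.hasFDerivAt
  -- the arc
  set j : ℝ → ℝ × Y := fun t => (t, 0) with hj
  have hjcd : ContDiff ℝ 2 j := contDiff_id.prodMk contDiff_const
  have hj0 : j 0 = (0, 0) := rfl
  set ζ : ℝ → Vec n := fun t => c (inv (j t)) with hζ
  have hζcd : ContDiffAt ℝ 2 ζ 0 := by
    have h1 : ContDiffAt ℝ 2 inv (j 0) := by rw [hj0]; exact hinvcd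
    have h2 : ContDiffAt ℝ 2 (fun t => inv (j t)) 0 := h1.comp 0 hjcd.contDiffAt
    exact hccd.contDiffAt.comp 0 h2
  have hζ0 : ζ 0 = xb := by
    show c (inv (j 0)) = xb
    rw [hj0, hinv0, hc00]
  -- derivative at 0
  have hjder : HasDerivAt j ((1:ℝ), (0:Y)) 0 := by
    have : HasDerivAt (fun t : ℝ => t) (1:ℝ) 0 := hasDerivAt_id 0
    exact this.prodMk (hasDerivAt_const 0 (0:Y))
  have hΘ'10 : Θ'.symm ((1:ℝ), (0:Y)) = ((1:ℝ), (0:Y)) := by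
    rw [ContinuousLinearEquiv.symm_apply_eq]
    have : T (0:Y) = 0 := map_zero T
    exact Prod.ext rfl this.symm
  have hζder : HasDerivAt ζ d 0 := by
    have hinvd' : HasFDerivAt inv (Θ'.symm : (ℝ × Y) →L[ℝ] (ℝ × Y)) (j 0) := by
      rw [hj0]; exact hinvd
    have h1 : HasDerivAt (fun t => inv (j t)) ((Θ'.symm : (ℝ × Y) →L[ℝ] (ℝ × Y)) ((1:ℝ), (0:Y))) 0 :=
      hinvd'.comp_hasDerivAt 0 hjder
    rw [show ((Θ'.symm : (ℝ × Y) →L[ℝ] (ℝ × Y)) ((1:ℝ), (0:Y))) = ((1:ℝ), (0:Y)) from hΘ'10] at h1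
    have h2 := (hcd (inv (j 0))).comp_hasDerivAt 0 h1
    have : c' ((1:ℝ), (0:Y)) = d := by rw [hc'app]; simp
    rwa [this] at h2
  -- choose a small interval
  obtain ⟨u0, hu0nhds, hu0cd⟩ := hζcd.contDiffOn le_rfl (by simp)
  obtain ⟨U, hUsub, hUopen, hU0⟩ := _root_.mem_nhds_iff.1 hu0nhds
  have hUcd : ContDiffOn ℝ 2 ζ U := hu0cd.mono hUsub
  have E1 : ∀ᶠ t in nhds (0:ℝ), ∀ b : tset, Φ (idx b) (ζ t) = 0 := by
    have hjt : Tendsto j (nhds 0) (nhds ((0:ℝ), (0:Y))) := by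
      rw [← hj0]; exact hjcd.continuous.continuousAt
    filter_upwards [hjt.eventually hright] with t ht b
    have := congrArg Prod.snd ht
    exact congrFun this b
  have E2 : ∀ᶠ t in nhds (0:ℝ), ‖ζ t - xb‖ < ε2 := by
    have hcont : ContinuousAt ζ 0 := hζcd.continuousAt
    have : Tendsto (fun t => ‖ζ t - xb‖) (nhds 0) (nhds ‖ζ 0 - xb‖) :=
      ((hcont.sub continuousAt_const).norm)
    rw [hζ0, sub_self, norm_zero] at this
    exact this.eventually_lt_const hε2
  have E3 : ∀ᶠ t in nhds (0:ℝ), t ∈ U := hUopen.mem_nhds hU0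
  obtain ⟨δ, hδ, hδall⟩ := Metric.eventually_nhds_iff.1 ((E1.and E2).and E3)
  have hIcoU : ∀ t ∈ Ico (0:ℝ) δ, t ∈ U := by
    intro t ht
    exact (hδall (by rw [Real.dist_eq, sub_zero, abs_of_nonneg ht.1]; exact ht.2)).2
  have hIco1 : ∀ t ∈ Ico (0:ℝ) δ, ∀ b : tset, Φ (idx b) (ζ t) = 0 := by
    intro t ht
    exact (hδall (by rw [Real.dist_eq, sub_zero, abs_of_nonneg ht.1]; exact ht.2)).1.1
  have hIco2 : ∀ t ∈ Ico (0:ℝ) δ, ‖ζ t - xb‖ < ε2 := by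
    intro t ht
    exact (hδall (by rw [Real.dist_eq, sub_zero, abs_of_nonneg ht.1]; exact ht.2)).1.2
  -- differentiability facts
  have hζdiff : ∀ t ∈ Ico (0:ℝ) δ, HasDerivAt ζ (deriv ζ t) t := by
    intro t ht
    have : DifferentiableAt ℝ ζ t :=
      ((hUcd t (hIcoU t ht)).contDiffAt (hUopen.mem_nhds (hIcoU t ht))).differentiableAt
        (by norm_num)
    exact this.hasDerivAt
  have hderiv1 : ContDiffOn ℝ 1 (deriv ζ) U := hUcd.deriv_of_isOpen hUopen (by norm_num)
  -- the derivative annihilates all gradients along the arc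
  have hkey : ∀ s ∈ Ico (0:ℝ) δ, ∀ a, fderiv ℝ (Φ a) (ζ s) (deriv ζ s) = 0 := by
    intro s hs
    refine hperp (ζ s) (hIco2 s hs) _ fun b => ?_
    have hcomp : HasDerivWithinAt (fun τ => Φ (idx b) (ζ τ))
        (fderiv ℝ (Φ (idx b)) (ζ s) (deriv ζ s)) (Ico (0:ℝ) δ) s := by
      have hb := (((hΦ (idx b)).differentiable (by norm_num)).differentiableAt
        (x := ζ s)).hasFDerivAt
      exact hb.comp_hasDerivWithinAt s ((hζdiff s hs).hasDerivWithinAt)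
    have hcongr : HasDerivWithinAt (fun _ : ℝ => (0:ℝ))
        (fderiv ℝ (Φ (idx b)) (ζ s) (deriv ζ s)) (Ico (0:ℝ) δ) s := by
      refine hcomp.congr (fun τ hτ => ?_) ?_
      · exact (hIco1 τ hτ b).symm
      · exact (hIco1 s hs b).symm
    have huniq : UniqueDiffWithinAt ℝ (Ico (0:ℝ) δ) s := uniqueDiffOn_Ico 0 δ s hs
    have h1 := hcongr.derivWithin huniq
    have h2 := (hasDerivWithinAt_const s (Ico (0:ℝ) δ) (0:ℝ)).derivWithin huniq
    rw [← h1, h2]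
  refine ⟨δ, hδ, ζ, ⟨?_, ?_⟩, hζ0, hζder.deriv, hζcd.continuousAt, ?_⟩
  · intro t ht
    exact (hζdiff t ht).hasDerivWithinAt
  · intro t ht
    exact ((hderiv1.differentiableOn one_ne_zero) t (hIcoU t ht)).mono
      (fun τ hτ => hIcoU τ hτ)
  · -- vanishing of all Φ a along the arc
    intro t ht a
    have hzero : (fun τ => Φ a (ζ τ)) t = (fun τ => Φ a (ζ τ)) 0 := by
      have hsub : Icc (0:ℝ) t ⊆ Ico (0:ℝ) δ := fun τ hτ =>
        ⟨hτ.1, lt_of_le_of_lt hτ.2 ht.2⟩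
      have hcont : ContinuousOn (fun τ => Φ a (ζ τ)) (Icc (0:ℝ) t) := by
        refine ((hΦ a).continuous.comp_continuousOn ?_)
        exact (hUcd.continuousOn).mono fun τ hτ => hIcoU τ (hsub hτ)
      have hder : ∀ s ∈ Ico (0:ℝ) t, HasDerivWithinAt (fun τ => Φ a (ζ τ)) 0 (Ici s) s := by
        intro s hs
        have hs' : s ∈ Ico (0:ℝ) δ := ⟨hs.1, lt_trans hs.2 ht.2⟩
        have hb := (((hΦ a).differentiable (by norm_num)).differentiableAt
          (x := ζ s)).hasFDerivAt
        have := (hb.comp_hasDerivAt s (hζdiff s hs')).hasDerivWithinAt (s := Ici s)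
        rwa [hkey s hs' a] at this
      exact constant_of_has_deriv_right_zero hcont hder t ⟨ht.1, le_refl t⟩
    calc Φ a (ζ t) = Φ a (ζ 0) := hzero
    _ = Φ a xb := by rw [hζ0]
    _ = 0 := hval a

end Aux

private lemma fderiv_zero_fun {n : ℕ} (x : Vec n) : fderiv ℝ (0 : Vec n → ℝ) x = 0 :=
  (hasFDerivAt_const (0:ℝ) x).fderiv

private lemma grad_zero {n : ℕ} (x : Vec n) : gradient (0 : Vec n → ℝ) x = 0 := by
  have : HasGradientAt (0 : Vec n → ℝ) 0 x := by
    rw [hasGradientAt_iff_hasFDerivAt]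
    simp only [map_zero]
    exact hasFDerivAt_const (0:ℝ) x
  exact this.gradient

theorem pwcr_implies_wsocq {n m p l : ℕ} (f : Vec n → ℝ) (g : Fin m → Vec n → ℝ)
    (h : Fin p → Vec n → ℝ) (G H : Fin l → Vec n → ℝ)
    (hf : ContDiff ℝ 2 f) (hg : ∀ i, ContDiff ℝ 2 (g i)) (hh : ∀ j, ContDiff ℝ 2 (h j))
    (hG : ∀ k, ContDiff ℝ 2 (G k)) (hH : ∀ k, ContDiff ℝ 2 (H k))
    (xb : Vec n) (hxb : xb ∈ Feas g h G H)
    (hcq : PWCR g h G H xb) : WSOCQ g h G H xb := by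
  classical
  intro d hdcrit _
  obtain ⟨hgle, hheq, hGHprod⟩ := hxb
  obtain ⟨hd1, hd2, hd3, hd4⟩ := hdcrit
  have hpart : Partition G H xb (IGH G H xb) ∅ := ⟨Set.inter_empty _, Set.union_empty _⟩
  obtain ⟨ε, hε, hrk⟩ := hcq (IGH G H xb) ∅ hpart
  -- the combined family
  set Φ : ((Fin m ⊕ Fin p) ⊕ (Fin l ⊕ Fin l)) → Vec n → ℝ :=
    Sum.elim (Sum.elim (fun i => if i ∈ Ig g xb then g i else 0) h)
      (Sum.elim (fun k => if k ∈ IG G H xb ∪ IGH G H xb then G k else 0)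
        (fun k => if k ∈ IH G H xb then H k else 0)) with hΦdef
  have hΦcd : ∀ a, ContDiff ℝ 2 (Φ a) := by
    rintro ((i | j) | (k | k)) <;> simp only [hΦdef, Sum.elim_inl, Sum.elim_inr] <;>
      first
        | exact hh j
        | (split_ifs <;> first | exact hg i | exact hG k | exact hH k | exact contDiff_const)
  have hΦval : ∀ a, Φ a xb = 0 := by
    rintro ((i | j) | (k | k)) <;> simp only [hΦdef, Sum.elim_inl, Sum.elim_inr]
    · split_ifs with hi
      · exact hi
      · rfl
    · exact hheq j
    · split_ifs with hk
      · rcases hk with hk | hk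
        · exact hk.1
        · exact hk.1
      · rfl
    · split_ifs with hk
      · exact hk.2
      · rfl
  have hΦd : ∀ a, fderiv ℝ (Φ a) xb d = 0 := by
    rintro ((i | j) | (k | k)) <;> simp only [hΦdef, Sum.elim_inl, Sum.elim_inr]
    · split_ifs with hi
      · exact hd1 i hi
      · rw [fderiv_zero_fun]; rfl
    · exact hd2 j
    · split_ifs with hk
      · exact hd3 k hk
      · rw [fderiv_zero_fun]; rfl
    · split_ifs with hk
      · exact hd4 k (Or.inl hk)
      · rw [fderiv_zero_fun]; rfl
  -- span identification
  have hSeq : ∀ x : Vec n,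
      Submodule.span ℝ (Set.range fun a => gradient (Φ a) x) =
      Submodule.span ℝ
        ((fun i => gradient (g i) x) '' Ig g xb ∪ Set.range (fun j => gradient (h j) x) ∪
          (fun k => gradient (G k) x) '' (IG G H xb ∪ IGH G H xb) ∪
          (fun k => gradient (H k) x) '' (IH G H xb ∪ ∅)) := by
    intro x
    apply le_antisymm
    · rw [Submodule.span_le]
      rintro _ ⟨a, rfl⟩
      rcases a with ((i | j) | (k | k)) <;> simp only [hΦdef, Sum.elim_inl, Sum.elim_inr]
      · split_ifs with hi
        · exact Submodule.subset_span (Or.inl (Or.inl (Or.inl ⟨i, hi, rfl⟩)))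
        · rw [grad_zero]; exact Submodule.zero_mem _
      · exact Submodule.subset_span (Or.inl (Or.inl (Or.inr ⟨j, rfl⟩)))
      · split_ifs with hk
        · exact Submodule.subset_span (Or.inl (Or.inr ⟨k, hk, rfl⟩))
        · rw [grad_zero]; exact Submodule.zero_mem _
      · split_ifs with hk
        · exact Submodule.subset_span (Or.inr ⟨k, Or.inl hk, rfl⟩)
        · rw [grad_zero]; exact Submodule.zero_mem _
    · rw [Submodule.span_le]
      rintro v (((⟨i, hi, rfl⟩ | ⟨j, rfl⟩) | ⟨k, hk, rfl⟩) | ⟨k, hk, rfl⟩)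
      · exact Submodule.subset_span ⟨.inl (.inl i), by
          simp only [hΦdef, Sum.elim_inl, if_pos hi]⟩
      · exact Submodule.subset_span ⟨.inl (.inr j), by
          simp only [hΦdef, Sum.elim_inl, Sum.elim_inr]⟩
      · exact Submodule.subset_span ⟨.inr (.inl k), by
          simp only [hΦdef, Sum.elim_inr, Sum.elim_inl, if_pos hk]⟩
      · rw [Set.union_empty] at hk
        exact Submodule.subset_span ⟨.inr (.inr k), by
          simp only [hΦdef, Sum.elim_inr, if_pos hk]⟩
  have hrank : ∀ x : Vec n, ‖x - xb‖ < ε →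
      Module.finrank ℝ ↥(Submodule.span ℝ (Set.range fun a => gradient (Φ a) x)) =
      Module.finrank ℝ ↥(Submodule.span ℝ (Set.range fun a => gradient (Φ a) xb)) := by
    intro x hx
    have := hrk x hx
    unfold gradRank at this
    rw [hSeq x, hSeq xb]
    exact this
  obtain ⟨δ0, hδ0, ζ, harc, hζ0, hζd0, hζcont, hvanish⟩ :=
    arc_of_rank Φ hΦcd xb hΦval hε hrank d hΦd
  -- activity of the family along the arc
  have hgact : ∀ t ∈ Ico (0:ℝ) δ0, ∀ i ∈ Ig g xb, g i (ζ t) = 0 := by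
    intro t ht i hi
    have := hvanish t ht (.inl (.inl i))
    rwa [hΦdef, Sum.elim_inl, Sum.elim_inl, if_pos hi] at this
  have hhact : ∀ t ∈ Ico (0:ℝ) δ0, ∀ j, h j (ζ t) = 0 := by
    intro t ht j
    have := hvanish t ht (.inl (.inr j))
    rwa [hΦdef, Sum.elim_inl, Sum.elim_inr] at this
  have hGact : ∀ t ∈ Ico (0:ℝ) δ0, ∀ k ∈ IG G H xb ∪ IGH G H xb, G k (ζ t) = 0 := by
    intro t ht k hk
    have := hvanish t ht (.inr (.inl k))
    rwa [hΦdef, Sum.elim_inr, Sum.elim_inl, if_pos hk] at this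
  have hHact : ∀ t ∈ Ico (0:ℝ) δ0, ∀ k ∈ IH G H xb, H k (ζ t) = 0 := by
    intro t ht k hk
    have := hvanish t ht (.inr (.inr k))
    rwa [hΦdef, Sum.elim_inr, Sum.elim_inr, if_pos hk] at this
  -- inactive inequality constraints stay negative
  have Eneg : ∀ᶠ t in nhds (0:ℝ), ∀ i, i ∉ Ig g xb → g i (ζ t) < 0 := by
    rw [eventually_all]
    intro i
    by_cases hi : i ∈ Ig g xb
    · exact Filter.Eventually.of_forall fun t hni => absurd hi hni
    · have hlt : g i xb < 0 := lt_of_le_of_ne (hgle i) hi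
      have htend : Tendsto (fun t => g i (ζ t)) (nhds 0) (nhds (g i xb)) := by
        have h1 : Tendsto ζ (nhds 0) (nhds xb) := by rw [← hζ0]; exact hζcont
        exact ((hg i).continuous.tendsto xb).comp h1
      filter_upwards [htend.eventually_lt_const hlt] with t ht _
      exact ht
  obtain ⟨δ1, hδ1, hδ1all⟩ := Metric.eventually_nhds_iff.1 Eneg
  set δ := min δ0 δ1 with hδdef
  have hδ : 0 < δ := lt_min hδ0 hδ1
  have hsub : Ico (0:ℝ) δ ⊆ Ico (0:ℝ) δ0 := Ico_subset_Ico le_rfl (min_le_left _ _)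
  have hneg : ∀ t ∈ Ico (0:ℝ) δ, ∀ i, i ∉ Ig g xb → g i (ζ t) < 0 := by
    intro t ht
    refine hδ1all ?_
    rw [Real.dist_eq, sub_zero, abs_of_nonneg ht.1]
    exact lt_of_lt_of_le ht.2 (min_le_right _ _)
  refine ⟨δ, hδ, IGH G H xb, ∅, Set.Subset.refl _, Set.empty_subset _, ζ, deriv ζ,
    ⟨?_, ?_⟩, ?_, hζ0, hζd0, ?_, ?_, ?_⟩
  · intro t ht
    exact (harc.1 t (hsub ht)).mono (Ico_subset_Ico le_rfl (min_le_left _ _))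
  · intro t ht
    exact (harc.2 t (hsub ht)).mono (Ico_subset_Ico le_rfl (min_le_left _ _))
  · -- feasibility
    intro t ht
    refine ⟨fun i => ?_, fun j => hhact t (hsub ht) j, fun k => ?_⟩
    · by_cases hi : i ∈ Ig g xb
      · exact le_of_eq (hgact t (hsub ht) i hi)
      · exact le_of_lt (hneg t ht i hi)
    · by_cases hGk : G k xb = 0
      · by_cases hHk : H k xb = 0
        · rw [hGact t (hsub ht) k (Or.inr ⟨hGk, hHk⟩), zero_mul]
        · rw [hGact t (hsub ht) k (Or.inl ⟨hGk, hHk⟩), zero_mul]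
      · have hHk : H k xb = 0 := by
          rcases mul_eq_zero.1 (hGHprod k) with h' | h'
          · exact absurd h' hGk
          · exact h'
        rw [hHact t (hsub ht) k ⟨hGk, hHk⟩, mul_zero]
  · intro t ht i hi
    exact hgact t (hsub ht) i hi
  · intro t ht k hk
    exact hGact t (hsub ht) k hk
  · intro t ht k hk
    rw [Set.union_empty] at hk
    exact hHact t (hsub ht) k hk

end MPSC
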